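/- Let $p$ be a prime and let $G\le S_p$ be a subgroup which is solvable and whose natural action on $\{1,\dots,p\}$ is primitive. Then there exists a $p$-cycle $\sigma\in S_p$ such that $G$ is contained in the normalizer $N_{S_p}(\langle\sigma\rangle)$ of the cyclic subgroup generated by $\sigma$. -/

import Mathlib

/-- A subgroup of `Sₙ` is primitive if its natural action on `{1, …, n}` is transitive
and every block of the action is trivial (a subsingleton or everything). -/
def Subgroup.IsPrimitivePerm {n : ℕ} (G : Subgroup (Equiv.Perm (Fin n))) : Prop :=
  MulAction.IsPretransitive G (Fin n) ∧
    ∀ B : Set (Fin n), MulAction.IsBlock G B → B.Subsingleton ∨ B = Set.univ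

/-- A solvable primitive subgroup of `S_p` (`p` prime) is contained in the normalizer
of the cyclic subgroup generated by some `p`-cycle. -/
theorem solvable_primitive_le_normalizer_of_prime (p : ℕ) (hp : p.Prime)
    (G : Subgroup (Equiv.Perm (Fin p))) (hsolv : IsSolvable G)
    (hprim : G.IsPrimitivePerm) :
    ∃ σ : Equiv.Perm (Fin p), σ.IsCycle ∧ σ.support.card = p ∧
      G ≤ Subgroup.normalizer (Subgroup.zpowers σ) := by
  classical
  obtain ⟨htrans, hblock⟩ := hprim
  have hp2 : 2 ≤ p := hp.two_le
  have hfin : Nontrivial (Fin p) := Fin.nontrivial_iff_two_le.mpr hp2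
  -- G is nontrivial
  have hGnt : Nontrivial G := by
    obtain ⟨x, y, hxy⟩ := hfin
    obtain ⟨g, hg⟩ := htrans.exists_smul_eq x y
    refine ⟨g, 1, fun h => hxy ?_⟩
    rw [h, one_smul] at hg
    exact hg
  -- the last nontrivial derived subgroup
  obtain ⟨n, hn⟩ := hsolv.solvable
  have hP : ∃ m, derivedSeries G m = ⊥ := ⟨n, hn⟩
  set k := Nat.find hP with hk
  have hkbot : derivedSeries G k = ⊥ := Nat.find_spec hP
  have hk0 : k ≠ 0 := by
    intro h
    rw [h, derivedSeries_zero] at hkbot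
    obtain ⟨a, b, hab⟩ := hGnt
    apply hab
    have ha := (Subgroup.eq_bot_iff_forall ⊤).mp hkbot a (by trivial)
    have hb := (Subgroup.eq_bot_iff_forall ⊤).mp hkbot b (by trivial)
    rw [ha, hb]
  set N : Subgroup G := derivedSeries G (k-1) with hN
  have hNbot : N ≠ ⊥ := Nat.find_min hP (by omega)
  have hNcomm : ⁅N, N⁆ = ⊥ := by
    have h1 : derivedSeries G (k-1+1) = ⊥ := by
      rw [Nat.sub_add_cancel (Nat.one_le_iff_ne_zero.mpr hk0)]; exact hkbot
    rwa [derivedSeries_succ] at h1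
  have hcomm : ∀ a b : G, a ∈ N → b ∈ N → a * b = b * a := by
    intro a b ha hb
    have := Subgroup.commutator_eq_bot_iff_le_centralizer.mp hNcomm ha
    exact (Subgroup.mem_centralizer_iff.mp this b hb).symm
  haveI hNnormal : N.Normal := derivedSeries_normal _ _
  -- N acts transitively
  have horb : ∃ a : Fin p, MulAction.orbit N a = Set.univ := by
    by_contra h
    push_neg at h
    have hsub : ∀ a : Fin p, (MulAction.orbit N a).Subsingleton := by
      intro a
      rcases hblock _ (MulAction.IsBlock.orbit_of_normal (N := N) a) with h' | h'
      · exact h'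
      · exact absurd h' (h a)
    apply hNbot
    rw [Subgroup.eq_bot_iff_forall]
    intro x hx
    have hfix : ∀ a : Fin p, (⟨x, hx⟩ : N) • a = a := by
      intro a
      exact hsub a (MulAction.mem_orbit a (⟨x, hx⟩ : N)) (MulAction.mem_orbit_self a)
    refine Subtype.ext (Equiv.ext fun y => ?_)
    simpa [Subgroup.smul_def, Equiv.Perm.smul_def] using hfix y
  obtain ⟨a0, ha0⟩ := horb
  have htransN : MulAction.IsPretransitive N (Fin p) := by
    constructor
    intro x y
    have hx : x ∈ MulAction.orbit N a0 := ha0 ▸ Set.mem_univ x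
    have hy : y ∈ MulAction.orbit N a0 := ha0 ▸ Set.mem_univ y
    obtain ⟨m, rfl⟩ := hx
    obtain ⟨m', rfl⟩ := hy
    exact ⟨m' * m⁻¹, by rw [mul_smul, inv_smul_smul]⟩
  -- N acts freely
  have hfree : ∀ (m : N) (a : Fin p), m • a = a → m = 1 := by
    intro m a hma
    have hall : ∀ y : Fin p, m • y = y := by
      intro y
      obtain ⟨m', hm'⟩ := htransN.exists_smul_eq a y
      have hc : (m : G) * (m' : G) = (m' : G) * (m : G) := hcomm _ _ m.2 m'.2
      calc m • y = m • (m' • a) := by rw [hm']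
        _ = ((m : G) * (m' : G)) • a := by rw [mul_smul]; rfl
        _ = ((m' : G) * (m : G)) • a := by rw [hc]
        _ = m' • (m • a) := by rw [mul_smul]; rfl
        _ = y := by rw [hma, hm']
    refine Subtype.ext (Subtype.ext (Equiv.ext fun y => ?_))
    simpa [Subgroup.smul_def, Equiv.Perm.smul_def] using hall y
  -- card N = p
  have hcard : Nat.card N = p := by
    have e : N ≃ Fin p := by
      refine Equiv.ofBijective (fun m => m • a0) ⟨?_, ?_⟩
      · intro m m' h
        simp only at h
        have h1 : (m'⁻¹ * m) • a0 = a0 := by rw [mul_smul, h, inv_smul_smul]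
        have h2 := hfree _ _ h1
        exact (inv_mul_eq_one.mp h2).symm
      · intro y
        obtain ⟨m, hm⟩ := htransN.exists_smul_eq a0 y
        exact ⟨m, hm⟩
    rw [Nat.card_congr e, Nat.card_eq_fintype_card, Fintype.card_fin]
  -- pick generator
  have hNnt : ∃ m0 : N, m0 ≠ 1 := by
    by_contra h
    push_neg at h
    exact hNbot (Subgroup.eq_bot_iff_forall N |>.mpr fun x hx => by
      simpa using congrArg (Subtype.val) (h ⟨x, hx⟩))
  obtain ⟨m0, hm0⟩ := hNnt
  have hord : orderOf m0 = p := by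
    have h1 : orderOf m0 ∣ Nat.card N := orderOf_dvd_natCard m0
    rw [hcard] at h1
    rcases (Nat.Prime.eq_one_or_self_of_dvd hp _ h1) with h | h
    · exact absurd (orderOf_eq_one_iff.mp h) hm0
    · exact h
  have hordσ : orderOf ((m0 : G) : Equiv.Perm (Fin p)) = p :=
    (orderOf_injective G.subtype (Subgroup.subtype_injective G) _).trans
      ((orderOf_injective N.subtype (Subgroup.subtype_injective N) m0).trans hord)
  set σ : Equiv.Perm (Fin p) := ((m0 : G) : Equiv.Perm (Fin p)) with hσ
  -- M = zpowers σ
  set M : Subgroup (Equiv.Perm (Fin p)) := N.map G.subtype with hM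
  have hcardM : Nat.card M = p :=
    (Nat.card_congr (Subgroup.equivMapOfInjective N G.subtype
      (Subgroup.subtype_injective G)).toEquiv.symm).trans hcard
  have hσM : σ ∈ M := ⟨(m0 : G), m0.2, rfl⟩
  have hZM : Subgroup.zpowers σ = M :=
    Subgroup.eq_of_le_of_card_ge (Subgroup.zpowers_le.mpr hσM)
      (by rw [hcardM, Nat.card_zpowers, hordσ])
  -- G normalizes M
  have hnorm : G ≤ Subgroup.normalizer (Subgroup.zpowers σ) := by
    rw [hZM]
    intro g hg
    rw [Subgroup.mem_normalizer_iff]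
    intro h
    constructor
    · rintro ⟨x, hx, rfl⟩
      have h2 : (⟨g, hg⟩ : G) * x * (⟨g, hg⟩ : G)⁻¹ ∈ N :=
        (derivedSeries_normal (G := G) (k-1)).conj_mem x hx ⟨g, hg⟩
      exact ⟨_, h2, rfl⟩
    · rintro ⟨x, hx, hxe⟩
      have h2 : (⟨g, hg⟩ : G)⁻¹ * x * ((⟨g, hg⟩ : G)⁻¹)⁻¹ ∈ N :=
        (derivedSeries_normal (G := G) (k-1)).conj_mem x hx (⟨g, hg⟩ : G)⁻¹
      refine ⟨_, h2, ?_⟩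
      show g⁻¹ * G.subtype x * g⁻¹⁻¹ = h
      rw [hxe]
      group
  -- σ moves every point
  have hmove : ∀ y : Fin p, σ y ≠ y := by
    intro y hy
    obtain ⟨z, hz⟩ := exists_ne y
    obtain ⟨m, hm⟩ := htransN.exists_smul_eq y z
    have hmem : ((m : G) : Equiv.Perm (Fin p)) ∈ M := ⟨(m : G), m.2, rfl⟩
    rw [← hZM] at hmem
    obtain ⟨i, hi⟩ := hmem
    have hfixpow : ∀ j : ℤ, (σ ^ j) y = y := by
      intro j
      induction j using Int.induction_on with
      | zero => simp
      | succ j ih =>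
          rw [zpow_add, zpow_one]
          simp only [Equiv.Perm.mul_apply]
          rw [hy, ih]
      | pred j ih =>
          have he : σ ^ (-(j:ℤ) - 1) = σ ^ (-(j:ℤ)) * σ⁻¹ := by rw [← zpow_sub_one]
          have hyinv : σ⁻¹ y = y := by
            have h5 := congrArg (fun t => σ⁻¹ t) hy
            simpa using h5.symm
          rw [he]
          simp only [Equiv.Perm.mul_apply]
          rw [hyinv, ih]
    have hmy : ((m : G) : Equiv.Perm (Fin p)) y = y := by rw [← hi]; exact hfixpow i
    have hmy' : m • y = y := hmy
    rw [hmy'] at hm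
    exact hz hm.symm
  refine ⟨σ, ?_, ?_, hnorm⟩
  · refine ⟨a0, hmove a0, fun y _ => ?_⟩
    obtain ⟨m, hm⟩ := htransN.exists_smul_eq a0 y
    have hmem : ((m : G) : Equiv.Perm (Fin p)) ∈ M := ⟨(m : G), m.2, rfl⟩
    rw [← hZM] at hmem
    obtain ⟨i, hi⟩ := hmem
    exact ⟨i, by rw [show σ ^ i = ((m : G) : Equiv.Perm (Fin p)) from hi]; exact hm⟩
  · have hsupp : σ.support = Finset.univ := by
      ext y
      simp [Equiv.Perm.mem_support, hmove y]
    rw [hsupp, Finset.card_univ, Fintype.card_fin]
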